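/- arXiv:2501.00123 — 3 statements merged into one kernel-verified Lean document; each statement's English description precedes it below -/
import Mathlib

section
/- In any central-by-abelian loop, the identity [a,b,c][b,c,a][c,a,b] = [bc,a][ab,c][ac,b] holds for all a,b,c. -/
universe u

class Loop (L : Type u) extends Mul L, One L where
  ldiv : L → L → L
  rdiv : L → L → L
  mul_ldiv : ∀ a b : L, a * ldiv a b = b
  ldiv_mul : ∀ a b : L, ldiv a (a * b) = b
  rdiv_mul : ∀ a b : L, rdiv b a * a = b
  mul_rdiv : ∀ a b : L, rdiv (b * a) a = b
  one_mul : ∀ a : L, 1 * a = a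
  mul_one : ∀ a : L, a * 1 = a

section Magma
variable {M : Type u} (mul : M → M → M)

/-- Left nucleus of a magma. -/
def leftNucS : Set M := {a | ∀ x y, mul (mul a x) y = mul a (mul x y)}
/-- Middle nucleus of a magma. -/
def midNucS : Set M := {a | ∀ x y, mul (mul x a) y = mul x (mul a y)}
/-- Right nucleus of a magma. -/
def rightNucS : Set M := {a | ∀ x y, mul (mul x y) a = mul x (mul y a)}
/-- Nucleus of a magma. -/
def nucS : Set M := leftNucS mul ∩ midNucS mul ∩ rightNucS mul
/-- Commutant (commutative center) of a magma. -/
def commutantS : Set M := {a | ∀ x, mul a x = mul x a}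
/-- Center of a magma: the commutant intersected with the nucleus. -/
def centerS : Set M := commutantS mul ∩ nucS mul
end Magma

namespace Loop
variable {L : Type u} [Loop L]

/-- The left inverse `a^λ`, satisfying `a^λ * a = 1`. -/
def linv (a : L) : L := Loop.rdiv 1 a
/-- The right inverse `a^ρ`, satisfying `a * a^ρ = 1`. -/
def rinv (a : L) : L := Loop.ldiv a 1
/-- The commutator `[a,b]`, defined by `a*b = (b*a)*[a,b]`. -/
def comm (a b : L) : L := Loop.ldiv (b*a) (a*b)
/-- The associator `[a,b,c]`, defined by `(a*b)*c = (a*(b*c))*[a,b,c]`. -/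
def assoc (a b c : L) : L := Loop.ldiv (a*(b*c)) ((a*b)*c)

end Loop

/-- The nucleus of a loop. -/
abbrev LNuc (L : Type u) [Loop L] : Set L := nucS (fun x y : L => x * y)
/-- The commutant of a loop. -/
abbrev LCommutant (L : Type u) [Loop L] : Set L := commutantS (fun x y : L => x * y)
/-- The center of a loop. -/
abbrev LCenter (L : Type u) [Loop L] : Set L := centerS (fun x y : L => x * y)

section Helpers
variable {L : Type u} [Loop L]

lemma zc {z : L} (hz : z ∈ LCenter L) (x : L) : z * x = x * z := hz.1 x
lemma zl {z : L} (hz : z ∈ LCenter L) (x y : L) : (z * x) * y = z * (x * y) := hz.2.1.1 x y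
lemma zm {z : L} (hz : z ∈ LCenter L) (x y : L) : (x * z) * y = x * (z * y) := hz.2.1.2 x y
lemma zr {z : L} (hz : z ∈ LCenter L) (x y : L) : (x * y) * z = x * (y * z) := hz.2.2 x y

lemma zswap {z : L} (hz : z ∈ LCenter L) (x y : L) : (x * z) * y = (x * y) * z := by
  rw [zm hz, zc hz y, ← zr hz]

lemma center_mul {z w : L} (hz : z ∈ LCenter L) (hw : w ∈ LCenter L) :
    z * w ∈ LCenter L := by
  refine ⟨fun x => ?_, ⟨fun x y => ?_, fun x y => ?_⟩, fun x y => ?_⟩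
  · show (z*w)*x = x*(z*w)
    rw [zl hz, zc hw x, ← zl hz, zc hz x, zm hz]
  · show ((z*w)*x)*y = (z*w)*(x*y)
    rw [zl hz, zl hz, zl hw, ← zl hz]
  · show (x*(z*w))*y = x*((z*w)*y)
    rw [← zm hz, zm hw, zm hz, ← zl hz]
  · show (x*y)*(z*w) = x*(y*(z*w))
    rw [← zr hw (x*y) z, zr hz, zr hw, zr hw y z]

lemma left_cancel {u x y : L} (h : u * x = u * y) : x = y := by
  have := congrArg (Loop.ldiv u) h
  rwa [Loop.ldiv_mul, Loop.ldiv_mul] at this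

lemma comm_eq (x y : L) : x * y = (y * x) * Loop.comm x y :=
  (Loop.mul_ldiv (y * x) (x * y)).symm

lemma assoc_eq (x y z : L) : (x * y) * z = (x * (y * z)) * Loop.assoc x y z :=
  (Loop.mul_ldiv (x * (y * z)) ((x * y) * z)).symm

lemma comm_inv (hcomm : ∀ a b : L, Loop.comm a b ∈ LCenter L) (x y : L) :
    Loop.comm y x * Loop.comm x y = 1 := by
  have h : x * y = (x * y) * (Loop.comm y x * Loop.comm x y) := by
    calc x * y = (y * x) * Loop.comm x y := comm_eq x y
    _ = ((x * y) * Loop.comm y x) * Loop.comm x y := by rw [← comm_eq y x]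
    _ = (x * y) * (Loop.comm y x * Loop.comm x y) := zr (hcomm x y) _ _
  have h1 : (x * y) * 1 = (x * y) * (Loop.comm y x * Loop.comm x y) := by
    rw [Loop.mul_one]; exact h
  exact (left_cancel h1).symm

end Helpers

/-- In any central-by-abelian loop,
`[a,b,c][b,c,a][c,a,b] = [bc,a][ab,c][ac,b]`. -/
theorem stmt3 {L : Type u} [Loop L]
    (hcomm : ∀ a b : L, Loop.comm a b ∈ LCenter L)
    (hassoc : ∀ a b c : L, Loop.assoc a b c ∈ LCenter L)
    (a b c : L) :
    (Loop.assoc a b c * Loop.assoc b c a) * Loop.assoc c a b =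
      (Loop.comm (b*c) a * Loop.comm (a*b) c) * Loop.comm (a*c) b := by
  set A1 := Loop.assoc a b c with hA1
  set A2 := Loop.assoc b c a with hA2
  set A3 := Loop.assoc c a b with hA3
  set C1 := Loop.comm (b*c) a with hC1
  set C2 := Loop.comm (a*b) c with hC2
  set C3 := Loop.comm (a*c) b with hC3
  set k := Loop.comm a c with hk
  set k' := Loop.comm c a with hk'
  have zA1 := hassoc a b c; rw [← hA1] at zA1
  have zA2 := hassoc b c a; rw [← hA2] at zA2
  have zA3 := hassoc c a b; rw [← hA3] at zA3
  have zC1 := hcomm (b*c) a; rw [← hC1] at zC1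
  have zC2 := hcomm (a*b) c; rw [← hC2] at zC2
  have zC3 := hcomm (a*c) b; rw [← hC3] at zC3
  have zk := hcomm a c; rw [← hk] at zk
  have zk' := hcomm c a; rw [← hk'] at zk'
  have hkk' : k * k' = 1 := by rw [hk, hk']; exact comm_inv hcomm c a
  -- Route 1
  have route1 : ((a*c)*b) * (k' * (A2 * C2)) = (a*(b*c)) * (A1 * (A3 * A2)) := by
    calc ((a*c)*b) * (k' * (A2 * C2))
        = (((c*a)*k)*b) * (k' * (A2 * C2)) := by rw [← comm_eq a c]
      _ = (((c*a)*b)*k) * (k' * (A2 * C2)) := by rw [zswap zk]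
      _ = (((c*(a*b))*A3)*k) * (k' * (A2 * C2)) := by rw [assoc_eq c a b, ← hA3]
      _ = ((c*(a*b))*(A3*k)) * (k' * (A2 * C2)) := by rw [zr zk]
      _ = (c*(a*b)) * ((A3*k) * (k' * (A2 * C2))) := by
            rw [zr (center_mul zk' (center_mul zA2 zC2))]
      _ = (c*(a*b)) * (A3 * (k * (k' * (A2 * C2)))) := by rw [zl zA3]
      _ = (c*(a*b)) * (A3 * ((k * k') * (A2 * C2))) := by rw [zl zk]
      _ = (c*(a*b)) * (A3 * (A2 * C2)) := by rw [hkk', Loop.one_mul]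
      _ = (c*(a*b)) * (A3 * (C2 * A2)) := by rw [zc zA2 C2]
      _ = (c*(a*b)) * ((A3 * C2) * A2) := by rw [zl zA3]
      _ = (c*(a*b)) * ((C2 * A3) * A2) := by rw [zc zA3 C2]
      _ = (c*(a*b)) * (C2 * (A3 * A2)) := by rw [zl zC2]
      _ = ((c*(a*b)) * C2) * (A3 * A2) := by rw [zm zC2]
      _ = ((a*b)*c) * (A3 * A2) := by rw [← comm_eq (a*b) c]
      _ = ((a*(b*c))*A1) * (A3 * A2) := by rw [assoc_eq a b c, ← hA1]
      _ = (a*(b*c)) * (A1 * (A3 * A2)) := by rw [zm zA1]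
  -- Route 2
  have route2 : ((a*c)*b) * (k' * (A2 * C2)) = (a*(b*c)) * (C1 * (C2 * C3)) := by
    calc ((a*c)*b) * (k' * (A2 * C2))
        = ((b*(a*c))*C3) * (k' * (A2 * C2)) := by rw [← comm_eq (a*c) b]
      _ = ((b*(a*c))*C3) * (k' * (C2 * A2)) := by rw [zc zA2 C2]
      _ = (((b*(a*c))*C3) * k') * (C2 * A2) := by rw [zm zk']
      _ = (((b*(a*c))*k') * C3) * (C2 * A2) := by rw [zswap zC3]
      _ = ((b*((a*c)*k')) * C3) * (C2 * A2) := by rw [zr zk']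
      _ = ((b*(c*a)) * C3) * (C2 * A2) := by rw [← comm_eq c a]
      _ = (b*(c*a)) * (C3 * (C2 * A2)) := by rw [zm zC3 (b*(c*a)) (C2*A2)]
      _ = (b*(c*a)) * (C3 * (A2 * C2)) := by rw [zc zA2 C2]
      _ = (b*(c*a)) * ((C3 * A2) * C2) := by rw [zl zC3]
      _ = (b*(c*a)) * ((A2 * C3) * C2) := by rw [zc zA2 C3]
      _ = (b*(c*a)) * (A2 * (C3 * C2)) := by rw [zl zA2]
      _ = ((b*(c*a)) * A2) * (C3 * C2) := by rw [zm zA2]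
      _ = ((b*c)*a) * (C3 * C2) := by rw [assoc_eq b c a, ← hA2]
      _ = ((a*(b*c))*C1) * (C3 * C2) := by rw [comm_eq (b*c) a, ← hC1]
      _ = (a*(b*c)) * (C1 * (C3 * C2)) := by rw [zm zC1]
      _ = (a*(b*c)) * (C1 * (C2 * C3)) := by rw [zc zC3 C2]
  have key : A1 * (A3 * A2) = C1 * (C2 * C3) := left_cancel (route1.symm.trans route2)
  calc (A1 * A2) * A3 = A1 * (A2 * A3) := zl zA1 _ _
    _ = A1 * (A3 * A2) := by rw [zc zA2]
    _ = C1 * (C2 * C3) := key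
    _ = (C1 * C2) * C3 := (zl zC1 _ _).symm
end

section
/- Let L be a loop with a normal involution *. Then L has the anti-automorphic inverse property ((xy)^λ = y^λ x^λ for all x,y) if and only if the map ν(x) = x^*x is a loop homomorphism L → Z(L,*), where Z(L,*) is the set of symmetric central elements. -/
universe u

theorem Loop.linv_mul' {L : Type u} [Loop L] (a : L) : Loop.linv a * a = 1 :=
  Loop.rdiv_mul a 1

theorem Loop.mul_right_cancel' {L : Type u} [Loop L] {a b c : L} (h : a * c = b * c) : a = b := by
  have := congrArg (fun z => Loop.rdiv z c) h
  simpa [Loop.mul_rdiv] using this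

theorem Loop.mul_left_cancel' {L : Type u} [Loop L] {a b c : L} (h : a * b = a * c) : b = c := by
  have := congrArg (fun z => Loop.ldiv a z) h
  simpa [Loop.ldiv_mul] using this

theorem key_lemma {L : Type u} [Loop L] (star : L → L)
    (hanti : ∀ a b : L, star (a * b) = star b * star a)
    (hnorm : ∀ x : L, star x * x ∈ LCenter L) (x y : L) :
    star (x * y) * (x * y) =
      (star y * y) * ((star x * x) * ((Loop.linv y * Loop.linv x) * (x * y))) := by
  have hcl : ∀ u v : L, ((star y * y) * u) * v = (star y * y) * (u * v) :=
    (hnorm y).2.1.1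
  have hdl : ∀ u v : L, ((star x * x) * u) * v = (star x * x) * (u * v) :=
    (hnorm x).2.1.1
  have hdc : ∀ u : L, (star x * x) * u = u * (star x * x) := (hnorm x).1
  have hdr : ∀ u v : L, (u * v) * (star x * x) = u * (v * (star x * x)) :=
    (hnorm x).2.2
  have hsx : star x = (star x * x) * Loop.linv x := by
    apply Loop.mul_right_cancel' (c := x)
    rw [hdl, Loop.linv_mul', Loop.mul_one]
  have hsy : star y = (star y * y) * Loop.linv y := by
    apply Loop.mul_right_cancel' (c := y)
    rw [hcl, Loop.linv_mul', Loop.mul_one]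
  set a := Loop.linv y with ha
  set b := Loop.linv x with hb
  set c := star y * y with hc
  set d := star x * x with hd
  calc star (x * y) * (x * y) = (star y * star x) * (x * y) := by rw [hanti]
    _ = ((c * a) * (d * b)) * (x * y) := by rw [← hsy, ← hsx]
    _ = (c * (a * (d * b))) * (x * y) := by rw [hcl a (d * b)]
    _ = (c * (a * (b * d))) * (x * y) := by rw [hdc b]
    _ = (c * ((a * b) * d)) * (x * y) := by rw [← hdr a b]
    _ = (c * (d * (a * b))) * (x * y) := by rw [← hdc (a * b)]
    _ = c * ((d * (a * b)) * (x * y)) := by rw [hcl (d * (a * b)) (x * y)]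
    _ = c * (d * ((a * b) * (x * y))) := by rw [hdl (a * b) (x * y)]

/-- For a loop with normal involution, the anti-automorphic inverse property
holds iff `ν(x) = x^*x` is a homomorphism into the symmetric center `Z(L,*)`. -/
theorem stmt9 {L : Type u} [Loop L] (star : L → L)
    (hstar2 : ∀ a : L, star (star a) = a)
    (hanti : ∀ a b : L, star (a * b) = star b * star a)
    (hnorm : ∀ x : L, star x * x ∈ LCenter L) :
    (∀ x y : L, Loop.linv (x * y) = Loop.linv y * Loop.linv x) ↔
      ((∀ x : L, star (star x * x) = star x * x) ∧
       (∀ x y : L, star (x * y) * (x * y) = (star x * x) * (star y * y))) := by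
  constructor
  · intro haaip
    constructor
    · intro x
      rw [hanti, hstar2]
    · intro x y
      have key := key_lemma star hanti hnorm x y
      rw [← haaip x y, Loop.linv_mul', Loop.mul_one] at key
      rw [key]
      exact (hnorm y).1 (star x * x)
  · rintro ⟨-, hmul⟩
    intro x y
    have key := key_lemma star hanti hnorm x y
    have h2 := hmul x y
    rw [key] at h2
    have h3 : (star y * y) * ((star x * x) * ((Loop.linv y * Loop.linv x) * (x * y)))
        = (star y * y) * ((star x * x) * 1) := by
      rw [h2, Loop.mul_one]
      exact (hnorm x).1 (star y * y)
    have h4 := Loop.mul_left_cancel' (Loop.mul_left_cancel' h3)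
    apply Loop.mul_right_cancel' (c := x * y)
    rw [Loop.linv_mul', h4]
end

section
/- Let (L,*) be a loop with involution, γ central, M = D(L,*,γ). Then the intersections with L of the nuclei of M are: Nuc_ℓ(M) ∩ L = Nuc_r(M) ∩ L = Z(L), Nuc_m(M) ∩ L = Nuc_m(L) ∩ K(L), and Nuc(M) ∩ L = Z(L). -/
universe u

/-- Multiplication of the Cayley–Dickson double `D(L,*,γ) = L ∪ Lj`,
encoded on `L × Bool` with `(a, false) = a` and `(a, true) = a·j`. -/
def CDmul {L : Type u} [Loop L] (star : L → L) (γ : L) :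
    L × Bool → L × Bool → L × Bool
  | (a, false), (b, false) => (a * b, false)
  | (a, false), (b, true)  => (b * a, true)
  | (a, true),  (b, false) => (a * star b, true)
  | (a, true),  (b, true)  => (γ * (star b * a), false)

section CDAux

variable {L : Type u} [Loop L]

theorem CD.lcancel {a b c : L} (h : a * b = a * c) : b = c := by
  have h' := congrArg (Loop.ldiv a) h
  rwa [Loop.ldiv_mul, Loop.ldiv_mul] at h'

theorem CD.star_inj (star : L → L) (hstar2 : ∀ a : L, star (star a) = a)
    {p q : L} (h : star p = star q) : p = q := by
  rw [← hstar2 p, ← hstar2 q, h]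

theorem CD.star_K (star : L → L) (hstar2 : ∀ a : L, star (star a) = a)
    (hanti : ∀ a b : L, star (a * b) = star b * star a)
    {a : L} (h : ∀ x, a * x = x * a) : ∀ x, star a * x = x * star a := by
  intro x
  calc star a * x = star a * star (star x) := by rw [hstar2]
    _ = star (star x * a) := (hanti _ _).symm
    _ = star (a * star x) := by rw [h]
    _ = star (star x) * star a := hanti _ _
    _ = x * star a := by rw [hstar2]

theorem CD.star_Nm (star : L → L) (hstar2 : ∀ a : L, star (star a) = a)
    (hanti : ∀ a b : L, star (a * b) = star b * star a)
    {a : L} (h : ∀ x y : L, (x * a) * y = x * (a * y)) :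
    ∀ x y : L, (x * star a) * y = x * (star a * y) := by
  intro x y
  apply CD.star_inj star hstar2
  calc star ((x * star a) * y) = star y * star (x * star a) := hanti _ _
    _ = star y * (star (star a) * star x) := by rw [hanti]
    _ = star y * (a * star x) := by rw [hstar2]
    _ = (star y * a) * star x := (h _ _).symm
    _ = (star y * star (star a)) * star x := by rw [hstar2]
    _ = star (star a * y) * star x := by rw [hanti]
    _ = star (x * (star a * y)) := (hanti _ _).symm

theorem CD.star_Nr_of_Nl (star : L → L) (hstar2 : ∀ a : L, star (star a) = a)
    (hanti : ∀ a b : L, star (a * b) = star b * star a)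
    {a : L} (h : ∀ x y : L, (a * x) * y = a * (x * y)) :
    ∀ x y : L, (x * y) * star a = x * (y * star a) := by
  intro x y
  apply CD.star_inj star hstar2
  calc star ((x * y) * star a) = star (star a) * star (x * y) := hanti _ _
    _ = a * (star y * star x) := by rw [hstar2, hanti]
    _ = (a * star y) * star x := (h _ _).symm
    _ = (star (star a) * star y) * star x := by rw [hstar2]
    _ = star (y * star a) * star x := by rw [hanti]
    _ = star (x * (y * star a)) := (hanti _ _).symm

theorem CD.star_Nl_of_Nr (star : L → L) (hstar2 : ∀ a : L, star (star a) = a)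
    (hanti : ∀ a b : L, star (a * b) = star b * star a)
    {a : L} (h : ∀ x y : L, (x * y) * a = x * (y * a)) :
    ∀ x y : L, (star a * x) * y = star a * (x * y) := by
  intro x y
  apply CD.star_inj star hstar2
  calc star ((star a * x) * y) = star y * star (star a * x) := hanti _ _
    _ = star y * (star x * star (star a)) := by rw [hanti]
    _ = star y * (star x * a) := by rw [hstar2]
    _ = (star y * star x) * a := (h _ _).symm
    _ = star (x * y) * star (star a) := by rw [hanti, hstar2]
    _ = star (star a * (x * y)) := (hanti _ _).symm

/-- Characterization of the left nucleus of the double intersected with `L`. -/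
theorem CD.left_iff (star : L → L)
    (hstar2 : ∀ a : L, star (star a) = a)
    (hanti : ∀ a b : L, star (a * b) = star b * star a)
    (γ : L) (hγ : γ ∈ LCenter L) (a : L) :
    ((a, false) : L × Bool) ∈ leftNucS (CDmul star γ) ↔ a ∈ LCenter L := by
  obtain ⟨gK, ⟨gNl, _gNm⟩, _gNr⟩ :
      (∀ x, γ * x = x * γ) ∧ ((∀ x y : L, (γ * x) * y = γ * (x * y)) ∧
        (∀ x y : L, (x * γ) * y = x * (γ * y))) ∧
        (∀ x y : L, (x * y) * γ = x * (y * γ)) := hγ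
  simp only [LCenter, centerS, nucS, leftNucS, midNucS, rightNucS, commutantS,
    Set.mem_inter_iff, Set.mem_setOf_eq]
  constructor
  · intro h
    have aNl : ∀ x y : L, (a * x) * y = a * (x * y) := by
      intro x y
      have := h (x, false) (y, false)
      simpa [CDmul] using this
    have h2 : ∀ x y : L, y * (a * x) = (y * x) * a := by
      intro x y
      have := h (x, false) (y, true)
      simpa [CDmul] using this
    have aK : ∀ x : L, a * x = x * a := by
      intro x
      have := h2 x 1
      rwa [Loop.one_mul, Loop.one_mul] at this
    have aNr : ∀ x y : L, (x * y) * a = x * (y * a) := by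
      intro x y
      rw [← aK y, ← h2 y x]
    have h3 : ∀ x z : L, (x * a) * z = (x * z) * a := by
      intro x z
      have := h (x, true) (z, false)
      simp only [CDmul, Prod.mk.injEq, and_true] at this
      have h4 : (x * a) * star (star z) = (x * star (star z)) * a := by
        have := h (x, true) (star z, false)
        simpa [CDmul] using this
      rwa [hstar2] at h4
    have aNm : ∀ x y : L, (x * a) * y = x * (a * y) := by
      intro x y
      rw [h3 x y, aNr x y, aK y]
    exact ⟨aK, ⟨aNl, aNm⟩, aNr⟩
  · rintro ⟨aK, ⟨aNl, aNm⟩, aNr⟩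
    rintro ⟨x, _ | _⟩ ⟨y, _ | _⟩ <;>
      simp only [CDmul, Prod.mk.injEq, and_true]
    · exact aNl x y
    · calc y * (a * x) = y * (x * a) := by rw [aK]
        _ = (y * x) * a := (aNr _ _).symm
    · calc (x * a) * star y = x * (a * star y) := aNm _ _
        _ = x * (star y * a) := by rw [aK]
        _ = (x * star y) * a := (aNr _ _).symm
    · calc γ * (star y * (x * a)) = γ * ((star y * x) * a) := by rw [aNr]
        _ = γ * (a * (star y * x)) := by rw [aK (star y * x)]
        _ = (γ * a) * (star y * x) := (gNl _ _).symm
        _ = (a * γ) * (star y * x) := by rw [gK]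
        _ = a * (γ * (star y * x)) := aNl _ _

/-- Characterization of the right nucleus of the double intersected with `L`. -/
theorem CD.right_iff (star : L → L)
    (hstar2 : ∀ a : L, star (star a) = a)
    (hanti : ∀ a b : L, star (a * b) = star b * star a)
    (γ : L) (hγ : γ ∈ LCenter L) (a : L) :
    ((a, false) : L × Bool) ∈ rightNucS (CDmul star γ) ↔ a ∈ LCenter L := by
  obtain ⟨gK, ⟨gNl, gNm⟩, _gNr⟩ :
      (∀ x, γ * x = x * γ) ∧ ((∀ x y : L, (γ * x) * y = γ * (x * y)) ∧
        (∀ x y : L, (x * γ) * y = x * (γ * y))) ∧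
        (∀ x y : L, (x * y) * γ = x * (y * γ)) := hγ
  simp only [LCenter, centerS, nucS, leftNucS, midNucS, rightNucS, commutantS,
    Set.mem_inter_iff, Set.mem_setOf_eq]
  constructor
  · intro h
    have aNr : ∀ x y : L, (x * y) * a = x * (y * a) := by
      intro x y
      have := h (x, false) (y, false)
      simpa [CDmul] using this
    have h3 : ∀ x z : L, (x * z) * star a = x * (star a * z) := by
      intro x z
      have := h (x, true) (star z, false)
      simp only [CDmul, Prod.mk.injEq, and_true] at this
      rw [hstar2] at this
      rw [this, hanti, hstar2]
    have saK : ∀ x : L, star a * x = x * star a := by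
      intro x
      have h0 := h3 1 x
      rw [Loop.one_mul, Loop.one_mul] at h0
      exact h0.symm
    have saNr : ∀ x z : L, (x * z) * star a = x * (z * star a) := by
      intro x z
      rw [h3 x z, saK]
    have h2 : ∀ x y : L, (y * x) * star a = (y * star a) * x := by
      intro x y
      have := h (x, false) (y, true)
      simpa [CDmul] using this
    have saNm : ∀ x y : L, (x * star a) * y = x * (star a * y) := by
      intro x y
      calc (x * star a) * y = (x * y) * star a := (h2 y x).symm
        _ = x * (y * star a) := saNr _ _
        _ = x * (star a * y) := by rw [saK]
    have aK : ∀ x : L, a * x = x * a := by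
      intro x
      apply CD.star_inj star hstar2
      rw [hanti, hanti]
      exact (saK (star x)).symm
    have aNm : ∀ x y : L, (x * a) * y = x * (a * y) := by
      have := CD.star_Nm star hstar2 hanti saNm
      intro x y
      have h5 := this x y
      rwa [hstar2] at h5
    have aNl : ∀ x y : L, (a * x) * y = a * (x * y) := by
      have := CD.star_Nl_of_Nr star hstar2 hanti saNr
      intro x y
      have h5 := this x y
      rwa [hstar2] at h5
    exact ⟨aK, ⟨aNl, aNm⟩, aNr⟩
  · rintro ⟨aK, ⟨aNl, aNm⟩, aNr⟩
    have saK : ∀ x : L, star a * x = x * star a := CD.star_K star hstar2 hanti aK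
    have saNr : ∀ x y : L, (x * y) * star a = x * (y * star a) :=
      CD.star_Nr_of_Nl star hstar2 hanti aNl
    have saNm : ∀ x y : L, (x * star a) * y = x * (star a * y) :=
      CD.star_Nm star hstar2 hanti aNm
    rintro ⟨x, _ | _⟩ ⟨y, _ | _⟩ <;>
      simp only [CDmul, Prod.mk.injEq, and_true]
    · exact aNr x y
    · calc (y * x) * star a = y * (x * star a) := saNr _ _
        _ = y * (star a * x) := by rw [saK]
        _ = (y * star a) * x := (saNm _ _).symm
    · calc (x * star y) * star a = x * (star y * star a) := saNr _ _
        _ = x * (star a * star y) := by rw [saK (star y)]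
        _ = x * star (y * a) := by rw [hanti]
    · rw [hanti, hstar2]
      calc (γ * (star y * x)) * a = γ * ((star y * x) * a) := gNl _ _
        _ = γ * (a * (star y * x)) := by rw [aK (star y * x)]
        _ = γ * ((a * star y) * x) := by rw [aNl]

/-- Characterization of the middle nucleus of the double intersected with `L`. -/
theorem CD.mid_iff (star : L → L)
    (hstar2 : ∀ a : L, star (star a) = a)
    (hanti : ∀ a b : L, star (a * b) = star b * star a)
    (γ : L) (a : L) :
    ((a, false) : L × Bool) ∈ midNucS (CDmul star γ) ↔
      ((∀ x y : L, (x * a) * y = x * (a * y)) ∧ (∀ x : L, a * x = x * a)) := by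
  simp only [midNucS, Set.mem_setOf_eq]
  constructor
  · intro h
    have aNm : ∀ x y : L, (x * a) * y = x * (a * y) := by
      intro x y
      have := h (x, false) (y, false)
      simpa [CDmul] using this
    have h2 : ∀ x y : L, y * (x * a) = (y * a) * x := by
      intro x y
      have := h (x, false) (y, true)
      simpa [CDmul] using this
    have aK : ∀ x : L, a * x = x * a := by
      intro x
      have h0 := h2 x 1
      rw [Loop.one_mul, Loop.one_mul] at h0
      exact h0.symm
    exact ⟨aNm, aK⟩
  · rintro ⟨aNm, aK⟩
    have saK : ∀ x : L, star a * x = x * star a := CD.star_K star hstar2 hanti aK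
    have saNm : ∀ x y : L, (x * star a) * y = x * (star a * y) :=
      CD.star_Nm star hstar2 hanti aNm
    rintro ⟨x, _ | _⟩ ⟨y, _ | _⟩ <;>
      simp only [CDmul, Prod.mk.injEq, and_true]
    · exact aNm x y
    · rw [← aK x, ← aNm y x]
    · rw [hanti]
      calc (x * star a) * star y = x * (star a * star y) := saNm _ _
        _ = x * (star y * star a) := by rw [saK]
    · rw [hanti]
      congr 1
      calc star y * (x * star a) = star y * (star a * x) := by rw [saK x]
        _ = (star y * star a) * x := (saNm _ _).symm
        _ = (star a * star y) * x := by rw [saK (star y)]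

end CDAux

/-- Intersections with `L` of the nuclei of the double `M = D(L,*,γ)`:
`Nucₗ(M) ∩ L = Nucᵣ(M) ∩ L = Z(L)`, `Nucₘ(M) ∩ L = Nucₘ(L) ∩ K(L)`, and
`Nuc(M) ∩ L = Z(L)`. -/
theorem stmt14 {L : Type u} [Loop L] (star : L → L)
    (hstar2 : ∀ a : L, star (star a) = a)
    (hanti : ∀ a b : L, star (a * b) = star b * star a)
    (γ : L) (hγ : γ ∈ LCenter L) :
    ({a : L | ((a, false) : L × Bool) ∈ leftNucS (CDmul star γ)} = LCenter L) ∧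
    ({a : L | ((a, false) : L × Bool) ∈ rightNucS (CDmul star γ)} = LCenter L) ∧
    ({a : L | ((a, false) : L × Bool) ∈ midNucS (CDmul star γ)}
        = midNucS (fun x y : L => x * y) ∩ LCommutant L) ∧
    ({a : L | ((a, false) : L × Bool) ∈ nucS (CDmul star γ)} = LCenter L) := by
  have hleft : {a : L | ((a, false) : L × Bool) ∈ leftNucS (CDmul star γ)} = LCenter L := by
    ext a
    simpa using CD.left_iff star hstar2 hanti γ hγ a
  have hright : {a : L | ((a, false) : L × Bool) ∈ rightNucS (CDmul star γ)} = LCenter L := by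
    ext a
    simpa using CD.right_iff star hstar2 hanti γ hγ a
  have hmid : {a : L | ((a, false) : L × Bool) ∈ midNucS (CDmul star γ)}
      = midNucS (fun x y : L => x * y) ∩ LCommutant L := by
    ext a
    simp only [Set.mem_setOf_eq, Set.mem_inter_iff, LCommutant, commutantS,
      midNucS]
    exact CD.mid_iff star hstar2 hanti γ a
  refine ⟨hleft, hright, hmid, ?_⟩
  ext a
  simp only [Set.mem_setOf_eq, nucS, Set.mem_inter_iff]
  constructor
  · rintro ⟨⟨hl, _⟩, _⟩
    exact (CD.left_iff star hstar2 hanti γ hγ a).mp hl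
  · intro ha
    have ha' := ha
    obtain ⟨aK, ⟨_, aNm⟩, _⟩ :
        (∀ x, a * x = x * a) ∧ ((∀ x y : L, (a * x) * y = a * (x * y)) ∧
          (∀ x y : L, (x * a) * y = x * (a * y))) ∧
          (∀ x y : L, (x * y) * a = x * (y * a)) := ha'
    exact ⟨⟨(CD.left_iff star hstar2 hanti γ hγ a).mpr ha,
      (CD.mid_iff star hstar2 hanti γ a).mpr ⟨aNm, aK⟩⟩,
      (CD.right_iff star hstar2 hanti γ hγ a).mpr ha⟩
end
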